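/- If h ∈ C(K) satisfies Ψ(h) = h, then Ψ(|h|²) ≥ |h|² on K, the sequence {Ψ^n(|h|²)}_{n≥1} converges uniformly on K to a function π(|h|²) ∈ C(K), and π(|h|²) ≥ |h|² on K. -/

import Mathlib

open MeasureTheory Filter Topology ComplexOrder

/-- `Φ` is a Markov operator on the bounded Borel measurable functions on `U`:
for each `x` there is a Borel probability measure `P x` representing `Φ` at `x`. -/
def IsMarkovOperator {U : Type*} [MeasurableSpace U]
    (Φ : (U → ℂ) → (U → ℂ)) : Prop :=
  ∀ x : U, ∃ P : Measure U, IsProbabilityMeasure P ∧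
    ∀ f : U → ℂ, Measurable f → (∃ C : ℝ, ∀ y, ‖f y‖ ≤ C) →
      Φ f x = ∫ y, f y ∂P

/-- `Φ` has the strong Feller property: it maps bounded Borel measurable
functions to continuous functions. -/
def HasStrongFeller {U : Type*} [MeasurableSpace U] [TopologicalSpace U]
    (Φ : (U → ℂ) → (U → ℂ)) : Prop :=
  ∀ f : U → ℂ, Measurable f → (∃ C : ℝ, ∀ y, ‖f y‖ ≤ C) → Continuous (Φ f)

/-- Boundary condition (A): for each boundary point `x` there is a barrier
`h ∈ C(K)` with `h x = 0`, `h < 0` off `x`, and `Φ (h_U) ≥ h_U` on `U`. -/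
def CondA {K : Type*} [TopologicalSpace K] (U : Set K)
    (Φ : (↥U → ℂ) → (↥U → ℂ)) : Prop :=
  ∀ x ∈ Uᶜ, ∃ h : C(K, ℂ), h x = 0 ∧ (∀ y : K, y ≠ x → h y < 0) ∧
    ∀ u : ↥U, h u.1 ≤ Φ (fun v : ↥U => h v.1) u

/-- Maximum principle (B): every real-valued `g ∈ C(K)` with `Φ (g_U) ≥ g_U`
on `U` attaining its global maximum inside `U` is constant. -/
def CondB {K : Type*} [TopologicalSpace K] (U : Set K)
    (Φ : (↥U → ℂ) → (↥U → ℂ)) : Prop :=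
  ∀ g : C(K, ℂ), (∀ x : K, (g x).im = 0) →
    (∀ u : ↥U, g u.1 ≤ Φ (fun v : ↥U => g v.1) u) →
    (∃ z ∈ U, ∀ x : K, g x ≤ g z) →
    ∀ x y : K, g x = g y

/-- The map `Ψ` : `Ψ f = Φ (f_U)` on `U` and `Ψ f = f` on `∂U = K \ U`. -/
noncomputable def psiFun {K : Type*} (U : Set K)
    (Φ : (↥U → ℂ) → (↥U → ℂ)) (f : K → ℂ) : K → ℂ :=
  open Classical in fun x => if hx : x ∈ U then Φ (fun v : ↥U => f v.1) ⟨x, hx⟩ else f x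

/-- If `h ∈ C(K)` satisfies `Ψ h = h` then `Ψ(|h|²) ≥ |h|²` on
`K`, the sequence `{Ψⁿ(|h|²)}` converges uniformly on `K` to some
`π(|h|²) ∈ C(K)`, and `π(|h|²) ≥ |h|²` on `K`. -/
theorem stmt7 {K : Type*} [MetricSpace K] [CompactSpace K]
    [MeasurableSpace K] [BorelSpace K]
    (U : Set K) (hUopen : IsOpen U) (hUdense : Dense U)
    (hbd : ∃ a b : K, a ∈ Uᶜ ∧ b ∈ Uᶜ ∧ a ≠ b)
    (Φ : (↥U → ℂ) → (↥U → ℂ))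
    (hM : IsMarkovOperator Φ) (hSF : HasStrongFeller Φ)
    (hA : CondA U Φ)
    (h : C(K, ℂ)) (hfix : psiFun U Φ ⇑h = ⇑h) :
    (∀ x : K, ((‖h x‖ ^ 2 : ℝ) : ℂ) ≤
        psiFun U Φ (fun y => ((‖h y‖ ^ 2 : ℝ) : ℂ)) x) ∧
    ∃ p : C(K, ℂ),
      TendstoUniformly
        (fun n x => (psiFun U Φ)^[n] (fun y => ((‖h y‖ ^ 2 : ℝ) : ℂ)) x)
        (⇑p) atTop ∧
      (∀ x : K, ((‖h x‖ ^ 2 : ℝ) : ℂ) ≤ p x) := by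
  classical
  choose P hPprob hPint using hM
  have hUmeas : MeasurableSet U := hUopen.measurableSet
  set q : K → ℝ := fun y => ‖h y‖ ^ 2 with hq
  have hqc : Continuous q := (h.continuous.norm.pow 2)
  have hq0 : ∀ y, 0 ≤ q y := fun y => by positivity
  obtain ⟨C0, hC0⟩ := (isCompact_range hqc).bddAbove
  set C : ℝ := max C0 0 with hCdef
  have hqC : ∀ y, q y ≤ C := fun y => le_trans (hC0 ⟨y, rfl⟩) (le_max_left _ _)
  have hCnn : (0:ℝ) ≤ C := le_max_right _ _
  have habsq : ∀ y, |q y| ≤ C := fun y => abs_le.mpr ⟨by linarith [hq0 y], hqC y⟩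
  -- the real operator S
  set S : (K → ℝ) → K → ℝ :=
    fun f x => if hx : x ∈ U then (∫ y, f y.1 ∂(P ⟨x, hx⟩)) else f x with hSdef
  have measRe : ∀ f : K → ℝ, Measurable f → Measurable fun v : ↥U => ((f v.1 : ℝ) : ℂ) :=
    fun f hf => Complex.measurable_ofReal.comp (hf.comp measurable_subtype_coe)
  have hrep : ∀ (f : K → ℝ) (B : ℝ), Measurable f → (∀ y, |f y| ≤ B) →
      ∀ (u : ↥U), Φ (fun v : ↥U => ((f v.1 : ℝ) : ℂ)) u = ((∫ y, f y.1 ∂(P u) : ℝ) : ℂ) := by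
    intro f B hf hb u
    rw [hPint u _ (measRe f hf) ⟨B, fun y => by simpa [Complex.norm_real] using hb y.1⟩]
    exact integral_ofReal
  have hint : ∀ (f : K → ℝ) (B : ℝ), Measurable f → (∀ y, |f y| ≤ B) → ∀ u : ↥U,
      Integrable (fun y : ↥U => f y.1) (P u) := by
    intro f B hf hb u
    haveI := hPprob u
    exact (integrable_const B).mono' ((hf.comp measurable_subtype_coe).aestronglyMeasurable)
      (Filter.Eventually.of_forall fun y => by simpa [Real.norm_eq_abs] using hb y.1)
  have hintc : ∀ f : K → ℝ, Continuous f → ∀ u : ↥U,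
      Integrable (fun y : ↥U => f y.1) (P u) := by
    intro f hf u
    obtain ⟨B, hB⟩ := (isCompact_range hf.norm).bddAbove
    exact hint f B hf.measurable (fun y => hB ⟨y, rfl⟩) u
  -- continuity of the integral part
  have hIc : ∀ f : K → ℝ, Measurable f → (∀ y, |f y| ≤ C) →
      Continuous fun u : ↥U => ∫ y, f y.1 ∂(P u) := by
    intro f hf hb
    have h1 : Continuous fun u : ↥U => (Φ (fun v : ↥U => ((f v.1 : ℝ) : ℂ)) u).re :=
      Complex.continuous_re.comp
        (hSF _ (measRe f hf) ⟨C, fun y => by simpa [Complex.norm_real] using hb y.1⟩)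
    convert h1 using 1
    funext u
    rw [hrep f C hf hb u, Complex.ofReal_re]
  have hScont : ∀ f : K → ℝ, Measurable f → (∀ y, |f y| ≤ C) → ContinuousOn (S f) U := by
    intro f hf hb
    rw [continuousOn_iff_continuous_restrict]
    convert hIc f hf hb using 1
    funext u
    simp only [Set.restrict_apply, hSdef, u.2, dif_pos, Subtype.coe_eta]
  have hSmeas : ∀ f : K → ℝ, Measurable f → (∀ y, |f y| ≤ C) → Measurable (S f) := by
    intro f hf hb
    exact Measurable.dite ((hIc f hf hb).measurable)
      ((hf.comp measurable_subtype_coe) : Measurable fun v : ↥(Uᶜ) => f v.1) hUmeas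
  have hS0 : ∀ f : K → ℝ, (∀ y, 0 ≤ f y) → ∀ y, 0 ≤ S f y := by
    intro f h0 y
    by_cases hy : y ∈ U
    · simp only [hSdef, dif_pos hy]
      exact integral_nonneg fun z => h0 z.1
    · simpa [hSdef, hy] using h0 y
  have hSleC : ∀ f : K → ℝ, Measurable f → (∀ y, |f y| ≤ C) → (∀ y, f y ≤ C) →
      ∀ y, S f y ≤ C := by
    intro f hf hb h1 y
    by_cases hy : y ∈ U
    · haveI := hPprob ⟨y, hy⟩
      simp only [hSdef, dif_pos hy]
      calc (∫ z, f z.1 ∂(P ⟨y, hy⟩)) ≤ ∫ _, C ∂(P ⟨y, hy⟩) :=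
            integral_mono (hint f C hf hb _) (integrable_const C) (fun z => h1 z.1)
        _ = C := by simp [measure_univ]
    · simpa [hSdef, hy] using h1 y
  have hSmono : ∀ f g : K → ℝ, Measurable f → (∀ y, |f y| ≤ C) →
      Measurable g → (∀ y, |g y| ≤ C) → (∀ y, f y ≤ g y) → ∀ y, S f y ≤ S g y := by
    intro f g hf hbf hg hbg hfg y
    by_cases hy : y ∈ U
    · simp only [hSdef, dif_pos hy]
      exact integral_mono (hint f C hf hbf _) (hint g C hg hbg _) (fun z => hfg z.1)
    · simpa [hSdef, hy] using hfg y
  -- the iterates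
  set Q : ℕ → K → ℝ := fun n => S^[n] q with hQdef
  have hQsucc : ∀ n, Q (n + 1) = S (Q n) := fun n => Function.iterate_succ_apply' S n q
  have hQzero : Q 0 = q := rfl
  have hQprop : ∀ n, Measurable (Q n) ∧ (∀ y, 0 ≤ Q n y) ∧ (∀ y, Q n y ≤ C) := by
    intro n
    induction n with
    | zero => exact ⟨hqc.measurable, hq0, hqC⟩
    | succ n ih =>
      obtain ⟨hm, h0, h1⟩ := ih
      have hb : ∀ y, |Q n y| ≤ C := fun y => abs_le.mpr ⟨by linarith [h0 y], h1 y⟩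
      refine ⟨?_, ?_, ?_⟩
      · rw [hQsucc]; exact hSmeas _ hm hb
      · rw [hQsucc]; exact hS0 _ h0
      · rw [hQsucc]; exact hSleC _ hm hb h1
  have hQabs : ∀ n y, |Q n y| ≤ C := fun n y =>
    abs_le.mpr ⟨by linarith [(hQprop n).2.1 y], (hQprop n).2.2 y⟩
  -- fixed point property of h
  have hfixU : ∀ u : ↥U, Φ (fun v : ↥U => h v.1) u = h u.1 := by
    intro u
    have := congrFun hfix u.1
    simpa [psiFun, dif_pos u.2, Subtype.coe_eta] using this
  obtain ⟨D0, hD0⟩ := (isCompact_range h.continuous.norm).bddAbove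
  have hD : ∀ y : K, ‖h y‖ ≤ D0 := fun y => hD0 ⟨y, rfl⟩
  -- q ≤ S q  (Cauchy-Schwarz / variance)
  have hqSq : ∀ y, q y ≤ S q y := by
    intro x
    by_cases hx : x ∈ U
    · haveI := hPprob ⟨x, hx⟩
      set μ := P ⟨x, hx⟩ with hμ
      have hhmeas : Measurable fun v : ↥U => h v.1 :=
        h.continuous.measurable.comp measurable_subtype_coe
      have h1 : (h x : ℂ) = ∫ y, h y.1 ∂μ := by
        rw [← hfixU ⟨x, hx⟩, hPint _ _ hhmeas ⟨D0, fun y => hD y.1⟩]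
      set X : ↥U → ℝ := fun y => ‖h y.1‖ with hX
      have hXmeas : Measurable X := hhmeas.norm
      have hXlp : MemLp X 2 μ :=
        MemLp.of_bound hXmeas.aestronglyMeasurable D0
          (Filter.Eventually.of_forall fun y => by
            simpa [hX, Real.norm_eq_abs, abs_of_nonneg (norm_nonneg _)] using hD y.1)
      have hvar := ProbabilityTheory.variance_nonneg X μ
      rw [ProbabilityTheory.variance_eq_sub hXlp] at hvar
      have h2 : ‖h x‖ ≤ ∫ y, X y ∂μ := by
        rw [h1]
        exact norm_integral_le_integral_norm _
      have h3 : ‖h x‖ ^ 2 ≤ (∫ y, X y ∂μ) ^ 2 :=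
        pow_le_pow_left₀ (norm_nonneg _) h2 2
      have h4 : (∫ y, X y ∂μ) ^ 2 ≤ ∫ y, (X ^ 2) y ∂μ := by linarith
      have h5 : (∫ y, (X ^ 2) y ∂μ) = ∫ y, q y.1 ∂μ := by
        apply integral_congr_ae
        exact Filter.Eventually.of_forall fun y => by simp [hX, hq]
      have : S q x = ∫ y, q y.1 ∂μ := by simp only [hSdef, dif_pos hx, hμ]
      rw [this, hq]
      calc ‖h x‖ ^ 2 ≤ (∫ y, X y ∂μ) ^ 2 := h3
        _ ≤ ∫ y, (X ^ 2) y ∂μ := h4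
        _ = ∫ y, q y.1 ∂μ := h5
    · simp [hSdef, hx]
  have hQmono : ∀ n y, Q n y ≤ Q (n + 1) y := by
    intro n
    induction n with
    | zero => intro y; rw [hQsucc 0, hQzero]; exact hqSq y
    | succ n ih =>
      intro y
      rw [hQsucc (n+1)]
      calc Q (n+1) y = S (Q n) y := by rw [hQsucc n]
        _ ≤ S (Q (n+1)) y :=
          hSmono (Q n) (Q (n+1)) (hQprop n).1 (hQabs n) (hQprop (n+1)).1 (hQabs (n+1)) ih y
  have hQmonoPt : ∀ y, Monotone fun n => Q n y := fun y =>
    monotone_nat_of_le_succ fun n => hQmono n y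
  have hqQ : ∀ n y, q y ≤ Q n y := fun n y => hQmonoPt y (Nat.zero_le n)
  -- the limit g
  set g : K → ℝ := fun x => ⨆ n, Q n x with hgdef
  have hgbdd : ∀ x, BddAbove (Set.range fun n => Q n x) := fun x =>
    ⟨C, by rintro r ⟨n, rfl⟩; exact (hQprop n).2.2 x⟩
  have hgtend : ∀ x, Tendsto (fun n => Q n x) atTop (𝓝 (g x)) := fun x =>
    tendsto_atTop_ciSup (hQmonoPt x) (hgbdd x)
  have hQleg : ∀ n x, Q n x ≤ g x := fun n x => le_ciSup (hgbdd x) n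
  have hqleg : ∀ x, q x ≤ g x := fun x => hQleg 0 x
  have hgleC : ∀ x, g x ≤ C := fun x => ciSup_le fun n => (hQprop n).2.2 x
  have hg0 : ∀ x, 0 ≤ g x := fun x => le_trans (hq0 x) (hqleg x)
  have hgabs : ∀ x, |g x| ≤ C := fun x => abs_le.mpr ⟨by linarith [hg0 x], hgleC x⟩
  have hgmeas : Measurable g :=
    measurable_of_tendsto_metrizable (fun n => (hQprop n).1) (tendsto_pi_nhds.2 hgtend)
  have hQbdry : ∀ n x, x ∉ U → Q n x = q x := by
    intro n
    induction n with
    | zero => intro x _; rfl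
    | succ n ih =>
      intro x hx
      rw [hQsucc]
      simp only [hSdef, dif_neg hx]
      exact ih x hx
  have hgbdry : ∀ x, x ∉ U → g x = q x := by
    intro x hx
    have : (fun n => Q n x) = fun _ => q x := funext fun n => hQbdry n x hx
    rw [hgdef]
    simp only [this, ciSup_const]
  -- g is harmonic on U
  have hgfixU : ∀ (x) (hx : x ∈ U), g x = ∫ y, g y.1 ∂(P ⟨x, hx⟩) := by
    intro x hx
    haveI := hPprob ⟨x, hx⟩
    have t1 : Tendsto (fun n => Q (n + 1) x) atTop (𝓝 (g x)) :=
      (hgtend x).comp (tendsto_add_atTop_nat 1)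
    have t2 : ∀ n, Q (n + 1) x = ∫ y, Q n y.1 ∂(P ⟨x, hx⟩) := fun n => by
      rw [hQsucc]; simp only [hSdef, dif_pos hx]
    have t3 : Tendsto (fun n => ∫ y, Q n y.1 ∂(P ⟨x, hx⟩)) atTop
        (𝓝 (∫ y, g y.1 ∂(P ⟨x, hx⟩))) := by
      apply integral_tendsto_of_tendsto_of_monotone
      · exact fun n => hint _ C (hQprop n).1 (hQabs n) _
      · exact hint g C hgmeas hgabs _
      · exact Filter.Eventually.of_forall fun y => hQmonoPt y.1
      · exact Filter.Eventually.of_forall fun y => hgtend y.1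
    have t4 : Tendsto (fun n => ∫ y, Q n y.1 ∂(P ⟨x, hx⟩)) atTop (𝓝 (g x)) := by
      apply t1.congr
      intro n; exact t2 n
    exact tendsto_nhds_unique t4 t3
  -- barrier construction
  have hbar : ∀ x₀, x₀ ∉ U → ∀ ε : ℝ, 0 < ε → ∃ w : K → ℝ, Continuous w ∧
      w x₀ = q x₀ + ε ∧ (∀ n y, Q n y ≤ w y) := by
    intro x₀ hx₀ ε hε
    obtain ⟨b, hb0, hbneg, hbsub⟩ := hA x₀ hx₀
    set r : K → ℝ := fun y => (b y).re with hrdef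
    have hrc : Continuous r := Complex.continuous_re.comp b.continuous
    have hr0 : r x₀ = 0 := by simp [hrdef, hb0]
    have hrneg : ∀ y, y ≠ x₀ → r y < 0 := fun y hy =>
      (Complex.lt_def.mp (hbneg y hy)).1
    have hrle0 : ∀ y, r y ≤ 0 := by
      intro y
      by_cases hy : y = x₀
      · rw [hy, hr0]
      · exact le_of_lt (hrneg y hy)
    have hbr : ∀ y, b y = ((r y : ℝ) : ℂ) := by
      intro y
      by_cases hy : y = x₀
      · rw [hy, hb0]; rw [hy] at *; simp [hrdef, hb0]
      · have := (Complex.lt_def.mp (hbneg y hy)).2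
        apply Complex.ext
        · simp [hrdef]
        · simpa using this
    obtain ⟨B, hB⟩ := (isCompact_range hrc.norm).bddAbove
    have hrB : ∀ y, |r y| ≤ B := fun y => by
      simpa [Real.norm_eq_abs] using hB ⟨y, rfl⟩
    -- subharmonicity of r
    have hrsub : ∀ (x) (hx : x ∈ U), r x ≤ ∫ y, r y.1 ∂(P ⟨x, hx⟩) := by
      intro x hx
      have h1 := hbsub ⟨x, hx⟩
      rw [show (fun v : ↥U => b v.1) = fun v : ↥U => ((r v.1 : ℝ) : ℂ) from
        funext fun v => hbr v.1] at h1
      rw [hrep r B hrc.measurable hrB ⟨x, hx⟩] at h1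
      rw [hbr x] at h1
      exact Complex.real_le_real.mp h1
    -- choice of δ and L
    obtain ⟨δ, hδpos, hδ⟩ := Metric.continuousAt_iff.mp hqc.continuousAt ε hε
    have hqnear : ∀ y, dist y x₀ < δ → q y < q x₀ + ε := by
      intro y hy
      have := hδ hy
      rw [Real.dist_eq, abs_lt] at this
      linarith [this.2]
    set T : Set K := {y | δ ≤ dist y x₀} with hTdef
    have hTclosed : IsClosed T :=
      isClosed_le continuous_const (continuous_id.dist continuous_const)
    have hTcomp : IsCompact T := hTclosed.isCompact
    obtain ⟨L, hLnn, hqwL⟩ : ∃ L : ℝ, 0 ≤ L ∧ ∀ y, q y ≤ q x₀ + ε - L * r y := by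
      rcases T.eq_empty_or_nonempty with hTe | hTne
      · refine ⟨0, le_refl _, fun y => ?_⟩
        have hy : y ∉ T := by rw [hTe]; exact Set.notMem_empty y
        have : dist y x₀ < δ := by
          by_contra hc
          exact hy (not_lt.mp hc)
        linarith [hqnear y this]
      · obtain ⟨z, hzT, hz⟩ := hTcomp.exists_isMaxOn hTne hrc.continuousOn
        have hzmax : ∀ y ∈ T, r y ≤ r z := fun y hy => hz hy
        have hzne : z ≠ x₀ := by
          intro hzz
          rw [hzz] at hzT
          simp only [hTdef, Set.mem_setOf_eq, dist_self] at hzT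
          linarith
        have hc : r z < 0 := hrneg z hzne
        refine ⟨C / (-r z), div_nonneg hCnn (by linarith), fun y => ?_⟩
        by_cases hyd : dist y x₀ < δ
        · have h1 := hqnear y hyd
          have h2 : C / (-r z) * r y ≤ 0 :=
            mul_nonpos_of_nonneg_of_nonpos (div_nonneg hCnn (by linarith)) (hrle0 y)
          linarith
        · have hyT : y ∈ T := not_lt.mp hyd
          have h1 : r y ≤ r z := hzmax y hyT
          have h2 : C / (-r z) * (-r z) = C := div_mul_cancel₀ C (by linarith)
          have h3 : C / (-r z) * (-r y) ≥ C / (-r z) * (-r z) :=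
            mul_le_mul_of_nonneg_left (by linarith) (div_nonneg hCnn (by linarith))
          have h4 := hqC y
          have h5 := hq0 x₀
          nlinarith
    set w : K → ℝ := fun y => q x₀ + ε - L * r y with hwdef
    have hwc : Continuous w := by
      apply Continuous.sub continuous_const (hrc.const_smul L)
    have hw0 : w x₀ = q x₀ + ε := by simp [hwdef, hr0]
    -- superharmonicity of w
    have hwsuper : ∀ f : K → ℝ, Measurable f → (∀ y, |f y| ≤ C) →
        (∀ y, f y ≤ w y) → ∀ y, S f y ≤ w y := by
      intro f hf hb hfw x
      by_cases hx : x ∈ U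
      · haveI := hPprob ⟨x, hx⟩
        simp only [hSdef, dif_pos hx]
        calc (∫ y, f y.1 ∂(P ⟨x, hx⟩)) ≤ ∫ y, w y.1 ∂(P ⟨x, hx⟩) :=
              integral_mono (hint f C hf hb _) (hintc w hwc _) (fun z => hfw z.1)
          _ = q x₀ + ε - L * ∫ y, r y.1 ∂(P ⟨x, hx⟩) := by
              rw [show (fun y : ↥U => w y.1) = fun y : ↥U => (q x₀ + ε) - L * r y.1 from rfl]
              rw [integral_sub (integrable_const _) ((hintc r hrc _).const_mul L)]
              rw [integral_const_mul]
              simp [measure_univ]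
          _ ≤ q x₀ + ε - L * r x := by
              have := mul_le_mul_of_nonneg_left (hrsub x hx) hLnn
              linarith
          _ = w x := rfl
      · simp only [hSdef, dif_neg hx]
        exact hfw x
    have hQw : ∀ n y, Q n y ≤ w y := by
      intro n
      induction n with
      | zero => exact fun y => hqwL y
      | succ n ih =>
        intro y
        rw [hQsucc]
        exact hwsuper _ (hQprop n).1 (hQabs n) ih y
    exact ⟨w, hwc, hw0, hQw⟩
  -- continuity at boundary points
  have hcontAt : ∀ (F : K → ℝ) (x₀ : K), x₀ ∉ U → (∀ y, q y ≤ F y) → F x₀ = q x₀ →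
      (∀ w : K → ℝ, (∀ n y, Q n y ≤ w y) → ∀ y, F y ≤ w y) → ContinuousAt F x₀ := by
    intro F x₀ hx₀ hlow h0 hup
    rw [ContinuousAt, h0, Metric.tendsto_nhds]
    intro ε hε
    obtain ⟨w, hwc, hw0, hwQ⟩ := hbar x₀ hx₀ (ε / 2) (by linarith)
    have hFw : ∀ y, F y ≤ w y := hup w hwQ
    have e1 : ∀ᶠ y in 𝓝 x₀, q x₀ - ε < q y :=
      (hqc.continuousAt).eventually (eventually_gt_nhds (by linarith))
    have e2 : ∀ᶠ y in 𝓝 x₀, w y < q x₀ + ε := by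
      have : w x₀ < q x₀ + ε := by rw [hw0]; linarith
      exact (hwc.continuousAt).eventually (eventually_lt_nhds this)
    filter_upwards [e1, e2] with y h1 h2
    rw [Real.dist_eq, abs_lt]
    constructor
    · linarith [hlow y]
    · linarith [hFw y]
  have hQcont : ∀ n, Continuous (Q n) := by
    intro n
    rw [continuous_iff_continuousAt]
    intro x
    by_cases hx : x ∈ U
    · cases n with
      | zero => exact hqc.continuousAt
      | succ n =>
        rw [hQsucc]
        exact (hScont (Q n) (hQprop n).1 (hQabs n)).continuousAt (hUopen.mem_nhds hx)
    · exact hcontAt (Q n) x hx (hqQ n) (hQbdry n x hx) (fun w hw y => hw n y)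
  have hgcont : Continuous g := by
    rw [continuous_iff_continuousAt]
    intro x
    by_cases hx : x ∈ U
    · have heq : ∀ y ∈ U, S g y = g y := by
        intro y hy
        simp only [hSdef, dif_pos hy]
        exact (hgfixU y hy).symm
      have h1 : ContinuousAt (S g) x :=
        (hScont g hgmeas hgabs).continuousAt (hUopen.mem_nhds hx)
      exact h1.congr (Filter.eventuallyEq_of_mem (hUopen.mem_nhds hx) fun y hy => heq y hy)
    · exact hcontAt g x hx hqleg (hgbdry x hx) (fun w hw y => ciSup_le fun n => hw n y)
  -- Dini's theorem
  have hdini : TendstoUniformly (fun n => Q n) g atTop := by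
    rw [Metric.tendstoUniformly_iff]
    intro ε hε
    set V : ℕ → Set K := fun n => {x | g x - Q n x < ε} with hVdef
    have hVopen : ∀ n, IsOpen (V n) :=
      fun n => isOpen_lt (hgcont.sub (hQcont n)) continuous_const
    have hVmono : Monotone V := by
      intro m n hmn x hx
      simp only [hVdef, Set.mem_setOf_eq] at hx ⊢
      have := hQmonoPt x hmn
      linarith
    have hcover : Set.univ ⊆ ⋃ n, V n := by
      intro x _
      have := (hgtend x).eventually (eventually_gt_nhds (show g x - ε < g x by linarith))
      obtain ⟨n, hn⟩ := this.exists
      exact Set.mem_iUnion.mpr ⟨n, by simp only [hVdef, Set.mem_setOf_eq]; linarith⟩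
    obtain ⟨N, hN⟩ := isCompact_univ.elim_directed_cover V hVopen hcover hVmono.directed_le
    filter_upwards [eventually_ge_atTop N] with n hn x
    have hxN : x ∈ V N := hN (Set.mem_univ x)
    simp only [hVdef, Set.mem_setOf_eq] at hxN
    have h1 : Q N x ≤ Q n x := hQmonoPt x hn
    have h2 : Q n x ≤ g x := hQleg n x
    rw [Real.dist_eq, abs_of_nonneg (by linarith)]
    linarith
  -- conversion to the complex statement
  have hiter : ∀ n, (psiFun U Φ)^[n] (fun y => ((q y : ℝ) : ℂ)) = fun x => ((Q n x : ℝ) : ℂ) := by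
    intro n
    induction n with
    | zero => rfl
    | succ n ih =>
      rw [Function.iterate_succ_apply', ih]
      funext x
      by_cases hx : x ∈ U
      · rw [show psiFun U Φ (fun x => ((Q n x : ℝ) : ℂ)) x
            = Φ (fun v : ↥U => ((Q n v.1 : ℝ) : ℂ)) ⟨x, hx⟩ from dif_pos hx]
        rw [hrep (Q n) C (hQprop n).1 (hQabs n) ⟨x, hx⟩]
        rw [hQsucc]
        simp only [hSdef, dif_pos hx]
      · rw [show psiFun U Φ (fun x => ((Q n x : ℝ) : ℂ)) x = ((Q n x : ℝ) : ℂ) from dif_neg hx]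
        rw [hQsucc]
        simp only [hSdef, dif_neg hx]
  have hqcoe : (fun y : K => ((‖h y‖ ^ 2 : ℝ) : ℂ)) = fun y => ((q y : ℝ) : ℂ) := rfl
  constructor
  · intro x
    rw [hqcoe]
    by_cases hx : x ∈ U
    · rw [show psiFun U Φ (fun y => ((q y : ℝ) : ℂ)) x
          = Φ (fun v : ↥U => ((q v.1 : ℝ) : ℂ)) ⟨x, hx⟩ from dif_pos hx]
      rw [hrep q C hqc.measurable habsq ⟨x, hx⟩]
      have : q x ≤ S q x := hqSq x
      simp only [hSdef, dif_pos hx] at this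
      exact_mod_cast Complex.real_le_real.mpr this
    · rw [show psiFun U Φ (fun y => ((q y : ℝ) : ℂ)) x = ((q x : ℝ) : ℂ) from dif_neg hx]
  · refine ⟨⟨fun x => ((g x : ℝ) : ℂ), Complex.continuous_ofReal.comp hgcont⟩, ?_, ?_⟩
    · have heq : (fun (n : ℕ) (x : K) => (psiFun U Φ)^[n] (fun y => ((‖h y‖ ^ 2 : ℝ) : ℂ)) x)
          = fun n x => ((Q n x : ℝ) : ℂ) := by
        funext n x
        rw [hqcoe, hiter n]
      rw [heq]
      show TendstoUniformly (fun n x => ((Q n x : ℝ) : ℂ)) (fun x => ((g x : ℝ) : ℂ)) atTop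
      rw [Metric.tendstoUniformly_iff]
      have hd := Metric.tendstoUniformly_iff.mp hdini
      intro ε hε
      filter_upwards [hd ε hε] with n hn x
      have := hn x
      rwa [show dist (((g x : ℝ) : ℂ)) (((Q n x : ℝ) : ℂ)) = dist (g x) (Q n x) by
        rw [dist_eq_norm, dist_eq_norm, ← Complex.ofReal_sub, Complex.norm_real]]
    · intro x
      exact Complex.real_le_real.mpr (hqleg x)
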